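/- Let F ∈ ℝ[t, x_1,...,x_n] and let ℓ be a linear form in x_1,...,x_n. If F is hyperbolic with respect to e = (1,0,...,0) and s ≥ 0, then the polynomial T_s^ℓ(F) = F + s·ℓ·(∂F/∂t) is also hyperbolic with respect to e. -/

import Mathlib

section NuijAux
open Polynomial

/-- The sign of the imaginary part of the logarithmic derivative of a product of
real-rooted linear factors, evaluated at a non-real point. -/
lemma ratio_im_aux (z : ℂ) (hz : z.im ≠ 0) (t : Multiset ℂ) (ht : ∀ r ∈ t, r.im = 0) :
    eval z (t.map (fun r => X - C r)).prod ≠ 0 ∧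
    ((eval z (derivative (t.map (fun r => X - C r)).prod) /
      eval z (t.map (fun r => X - C r)).prod).im * z.im ≤ 0) ∧
    (t ≠ 0 → (eval z (derivative (t.map (fun r => X - C r)).prod) /
      eval z (t.map (fun r => X - C r)).prod).im * z.im < 0) := by
  induction t using Multiset.induction_on with
  | empty => simp
  | cons r t ih =>
    obtain ⟨h1, h2, _⟩ := ih (fun x hx => ht x (Multiset.mem_cons_of_mem hx))
    have hrim : r.im = 0 := ht r (Multiset.mem_cons_self r t)
    have hzr : z - r ≠ 0 := by
      intro h
      apply hz
      have : (z - r).im = 0 := by rw [h]; simp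
      simpa [Complex.sub_im, hrim] using this
    set q := (t.map (fun r => X - C r)).prod with hq
    have hprod : ((r ::ₘ t).map (fun r => X - C r)).prod = (X - C r) * q := by
      simp [hq]
    rw [hprod]
    have hd : derivative ((X - C r) * q) = q + (X - C r) * derivative q := by
      rw [derivative_mul]; simp
    have he1 : eval z ((X - C r) * q) = (z - r) * eval z q := by simp
    have hne : (z - r) * eval z q ≠ 0 := mul_ne_zero hzr h1
    refine ⟨by rwa [he1], ?_⟩
    have key : eval z (derivative ((X - C r) * q)) / eval z ((X - C r) * q)
        = (z - r)⁻¹ + eval z (derivative q) / eval z q := by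
      rw [hd, he1]
      simp only [eval_add, eval_mul, eval_sub, eval_X, eval_C]
      field_simp
    rw [key]
    have him : ((z - r)⁻¹).im = -z.im / Complex.normSq (z - r) := by
      rw [Complex.inv_im]; simp [hrim]
    have hpos : 0 < Complex.normSq (z - r) := Complex.normSq_pos.mpr hzr
    have hlt : ((z - r)⁻¹).im * z.im < 0 := by
      rw [him]
      rw [div_mul_eq_mul_div, neg_mul]
      apply div_neg_of_neg_of_pos _ hpos
      nlinarith [sq_nonneg z.im, hz, mul_self_pos.mpr hz]
    have : ((z - r)⁻¹ + eval z (derivative q) / eval z q).im * z.im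
        = ((z - r)⁻¹).im * z.im + (eval z (derivative q) / eval z q).im * z.im := by
      rw [Complex.add_im]; ring
    rw [this]
    constructor
    · linarith
    · intro _; linarith

/-- If `p` is real-rooted and `k` is real then `p + k·p'` is real-rooted. -/
lemma realRooted_add_C_mul_deriv (p : Polynomial ℝ) (k : ℝ)
    (hp : ∀ z : ℂ, aeval z p = 0 → z.im = 0) :
    ∀ z : ℂ, aeval z (p + C k * derivative p) = 0 → z.im = 0 := by
  intro z hzroot
  by_contra hz
  have hp0 : p ≠ 0 := by
    intro h
    have := hp Complex.I (by simp [h])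
    simp [Complex.I_im] at this
  set P := p.map (algebraMap ℝ ℂ) with hP
  have hP0 : P ≠ 0 := Polynomial.map_ne_zero hp0
  have haeval : ∀ (w : ℂ) (q : ℝ[X]), (aeval w q : ℂ) = eval w (q.map (algebraMap ℝ ℂ)) := by
    intro w q; rw [aeval_def, eval₂_eq_eval_map]
  have hroots : ∀ r ∈ P.roots, r.im = 0 := by
    intro r hr
    apply hp r
    have h2 := (mem_roots hP0).mp hr
    rw [haeval]; exact h2
  have hcard : Multiset.card P.roots = P.natDegree :=
    splits_iff_card_roots.mp (IsAlgClosed.splits P)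
  have hfac := C_leadingCoeff_mul_prod_multiset_X_sub_C hcard
  set Q := (P.roots.map (fun a => X - C a)).prod with hQ
  obtain ⟨hQ0, hle, hlt⟩ := ratio_im_aux z hz P.roots hroots
  -- equation from the root
  have heq : eval z P + (k : ℂ) * eval z (derivative P) = 0 := by
    have := hzroot
    rw [haeval] at this
    rw [Polynomial.map_add, Polynomial.map_mul, Polynomial.map_C, ← derivative_map] at this
    simpa [hP] using this
  have hlead : P.leadingCoeff ≠ 0 := leadingCoeff_ne_zero.mpr hP0
  have hevalP : eval z P = P.leadingCoeff * eval z Q := by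
    conv_lhs => rw [← hfac]
    simp [hQ]
  have hevalP' : eval z (derivative P) = P.leadingCoeff * eval z (derivative Q) := by
    conv_lhs => rw [← hfac]
    rw [derivative_mul]
    simp [hQ]
  rw [hevalP, hevalP'] at heq
  have heq2 : eval z Q + (k : ℂ) * eval z (derivative Q) = 0 := by
    have : P.leadingCoeff * (eval z Q + (k : ℂ) * eval z (derivative Q)) = 0 := by
      linear_combination heq
    rcases mul_eq_zero.mp this with h | h
    · exact absurd h hlead
    · exact h
  have hk : (k : ℂ) ≠ 0 := by
    intro h
    rw [h] at heq2
    simp at heq2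
    exact hQ0 heq2
  have hratio : eval z (derivative Q) / eval z Q = -(k : ℂ)⁻¹ := by
    have hQ0' : eval z Q ≠ 0 := hQ0
    rw [div_eq_iff hQ0']
    field_simp
    linear_combination heq2
  by_cases ht : P.roots = 0
  · have hQ1 : Q = 1 := by rw [hQ, ht]; simp
    rw [hQ1] at hratio
    simp at hratio
    exact hk (by exact_mod_cast hratio)
  · rw [hratio] at hlt
    have h0 : (-(k : ℂ)⁻¹).im = 0 := by simp
    have h2 := hlt ht
    rw [h0] at h2
    simp at h2

end NuijAux


open MvPolynomial

/-- A real univariate polynomial is real-rooted if all its complex roots are real. -/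
def RealRooted (p : Polynomial ℝ) : Prop :=
  ∀ z : ℂ, Polynomial.aeval z p = 0 → z.im = 0

/-- Hyperbolicity of a form with respect to a point. -/
def Hyperbolic {n : ℕ} (F : MvPolynomial (Fin (n + 1)) ℝ) (e : Fin (n + 1) → ℝ) : Prop :=
  MvPolynomial.eval e F ≠ 0 ∧
    ∀ a : Fin (n + 1) → ℝ,
      RealRooted
        (MvPolynomial.aeval
          (fun i => Polynomial.C (e i) * Polynomial.X - Polynomial.C (a i)) F)



/-- Chain rule: the substitution turns `∂/∂t` into `d/dX`, since only variable `0`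
is sent to a non-constant polynomial (with derivative `1`). -/
lemma aeval_pderiv_zero {n : ℕ} (e : Fin (n + 1) → ℝ)
    (he : e = fun i => if i = 0 then 1 else 0) (a : Fin (n + 1) → ℝ)
    (F : MvPolynomial (Fin (n + 1)) ℝ) :
    (MvPolynomial.aeval (fun i => Polynomial.C (e i) * Polynomial.X - Polynomial.C (a i))
        (pderiv 0 F))
      = Polynomial.derivative
        (MvPolynomial.aeval (fun i => Polynomial.C (e i) * Polynomial.X - Polynomial.C (a i)) F) := by
  set φ := MvPolynomial.aeval (R := ℝ)
    (fun i => Polynomial.C (e i) * Polynomial.X - Polynomial.C (a i)) with hφ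
  induction F using MvPolynomial.induction_on with
  | C r => simp
  | add p q hp hq => simp [map_add, hp, hq]
  | mul_X p i hp =>
    rw [pderiv_mul, map_add, map_mul, map_mul, hp, map_mul, Polynomial.derivative_mul]
    congr 1
    have hX : φ (X i) = Polynomial.C (e i) * Polynomial.X - Polynomial.C (a i) := by
      rw [hφ]; simp
    have hdX : Polynomial.derivative (φ (X i)) = Polynomial.C (e i) := by
      rw [hX]; simp
    rw [hdX]
    have : pderiv (0 : Fin (n+1)) (X i : MvPolynomial (Fin (n+1)) ℝ)
        = if i = 0 then 1 else 0 := by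
      rw [pderiv_X]
      by_cases h : i = 0
      · subst h; simp
      · simp [Pi.single_apply, Ne.symm h, h]
    rw [this]
    by_cases h : i = 0
    · subst h; simp [he]
    · simp [he, h]

/-- Nuij's operator preserves hyperbolicity: if `F ∈ ℝ[t,x₁,…,xₙ]` (variable `0` being `t`)
is hyperbolic with respect to `e = (1,0,…,0)`, `ℓ = Σ cᵢxᵢ` is a linear form in the
variables `x₁,…,xₙ`, and `s ≥ 0`, then `T_s^ℓ(F) = F + s·ℓ·(∂F/∂t)` is also hyperbolic
with respect to `e`. -/
theorem Nuij_operator_preserves_hyperbolicity {n : ℕ}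
    (F : MvPolynomial (Fin (n + 1)) ℝ)
    (e : Fin (n + 1) → ℝ) (he : e = fun i => if i = 0 then 1 else 0)
    (c : Fin n → ℝ) (s : ℝ) (hs : 0 ≤ s)
    (hF : Hyperbolic F e) :
    Hyperbolic (F + C s * (∑ i : Fin n, C (c i) * X i.succ) * pderiv 0 F) e := by
  constructor
  · -- evaluation at e is unchanged since ℓ(e) = 0
    have hl : MvPolynomial.eval e (∑ i : Fin n, C (c i) * X i.succ) = 0 := by
      rw [map_sum]
      apply Finset.sum_eq_zero
      intro i _
      simp [he, Fin.succ_ne_zero i]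
    rw [map_add]
    have hz : MvPolynomial.eval e (C s * (∑ i : Fin n, C (c i) * X i.succ) * pderiv 0 F) = 0 := by
      rw [eval_mul, eval_mul, hl]
      ring
    rw [hz, add_zero]
    exact hF.1
  · intro a
    set φ := MvPolynomial.aeval (R := ℝ)
      (fun i => Polynomial.C (e i) * Polynomial.X - Polynomial.C (a i)) with hφ
    set k : ℝ := s * (∑ i : Fin n, c i * (-(a i.succ))) with hk
    have hl2 : φ (∑ i : Fin n, C (c i) * X i.succ)
        = Polynomial.C (∑ i : Fin n, c i * (-(a i.succ))) := by
      rw [map_sum, map_sum]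
      apply Finset.sum_congr rfl
      intro i _
      rw [map_mul, hφ]
      simp [he, Fin.succ_ne_zero i, mul_comm]
    have key : φ (F + C s * (∑ i : Fin n, C (c i) * X i.succ) * pderiv 0 F)
        = φ F + Polynomial.C k * Polynomial.derivative (φ F) := by
      rw [map_add, map_mul, map_mul, hl2]
      rw [show φ (pderiv 0 F) = Polynomial.derivative (φ F) from aeval_pderiv_zero e he a F]
      congr 1
      rw [hk, aeval_C]
      rw [show (algebraMap ℝ (Polynomial ℝ)) s = Polynomial.C s from rfl, ← Polynomial.C_mul]
    rw [hφ] at key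
    rw [key]
    exact realRooted_add_C_mul_deriv _ k (hF.2 a)
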